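/- Let A be an N×N real matrix with nonnegative entries such that each row and each column of A has at least one positive entry, let b ∈ ℝ^N with b > 0 componentwise and y ∈ ℝ^N with y ≥ 0 componentwise. Define the Kullback–Leibler functional J₀^{KL}(x) = Σ_{i=1}^N { y_i ln(y_i/(Ax+b)_i) + (Ax+b)_i − y_i }, with the convention 0·ln 0 = 0 (so terms with y_i = 0 contribute (Ax+b)_i). Then on the nonnegative orthant {x ≥ 0}: J₀^{KL} is nonnegative, convex, and coercive (J₀^{KL}(x⁽ʲ⁾) → ∞ whenever x⁽ʲ⁾ ≥ 0, ‖x⁽ʲ⁾‖ → ∞); consequently min_{x ≥ 0} J₀^{KL}(x) has a global solution. -/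

import Mathlib

open Real

lemma klTerm_nonneg (y t : ℝ) (hy : 0 ≤ y) (ht : 0 < t) :
    0 ≤ y * Real.log (y / t) + t - y := by
  rcases eq_or_lt_of_le hy with h | h
  · simp [← h]; exact ht.le
  · have h1 : Real.log (t / y) ≤ t / y - 1 := Real.log_le_sub_one_of_pos (by positivity)
    have h2 : Real.log (y / t) = -Real.log (t / y) := by
      rw [← Real.log_inv]; congr 1; field_simp
    have h3 : y * (t / y) = t := by field_simp
    nlinarith [mul_le_mul_of_nonneg_left h1 hy]

lemma klTerm_lb (y t : ℝ) (hy : 0 ≤ y) (ht : 1 ≤ t) :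
    Real.sqrt t * (Real.sqrt t - 2 * y) - 1 ≤ y * Real.log (y / t) + t - y := by
  have ht0 : (0 : ℝ) < t := lt_of_lt_of_le one_pos ht
  have hst : Real.sqrt t * Real.sqrt t = t := Real.mul_self_sqrt ht0.le
  have hlog : Real.log t ≤ 2 * Real.sqrt t := by
    have h1 : Real.log (Real.sqrt t) ≤ Real.sqrt t - 1 :=
      Real.log_le_sub_one_of_pos (Real.sqrt_pos.2 ht0)
    have h2 : Real.log (Real.sqrt t) = Real.log t / 2 := Real.log_sqrt ht0.le
    linarith
  rcases eq_or_lt_of_le hy with h | h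
  · simp [← h]; nlinarith
  · have hylogy : y - 1 ≤ y * Real.log y := by
      have h1 : Real.log y⁻¹ ≤ y⁻¹ - 1 := Real.log_le_sub_one_of_pos (by positivity)
      rw [Real.log_inv] at h1
      have h3 : y * y⁻¹ = 1 := by field_simp
      nlinarith [mul_le_mul_of_nonneg_left h1 hy]
    rw [Real.log_div (ne_of_gt h) (ne_of_gt ht0)]
    nlinarith [mul_le_mul_of_nonneg_left hlog hy]

lemma klTerm_convex (y t₁ t₂ a c : ℝ) (hy : 0 ≤ y) (h1 : 0 < t₁) (h2 : 0 < t₂)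
    (ha : 0 ≤ a) (hc : 0 ≤ c) (hac : a + c = 1) :
    y * Real.log (y / (a * t₁ + c * t₂)) + (a * t₁ + c * t₂) - y ≤
      a * (y * Real.log (y / t₁) + t₁ - y) + c * (y * Real.log (y / t₂) + t₂ - y) := by
  have hs : 0 < a * t₁ + c * t₂ := by
    rcases eq_or_lt_of_le ha with h | h
    · have : c = 1 := by linarith
      simp [← h, this, h2]
    · nlinarith
  have hlog : a * Real.log t₁ + c * Real.log t₂ ≤ Real.log (a * t₁ + c * t₂) := by
    have := (strictConcaveOn_log_Ioi.concaveOn).2 (Set.mem_Ioi.2 h1) (Set.mem_Ioi.2 h2) ha hc hac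
    simpa [smul_eq_mul] using this
  rcases eq_or_lt_of_le hy with h | h
  · simp [← h]
  · rw [Real.log_div (ne_of_gt h) (ne_of_gt hs), Real.log_div (ne_of_gt h) (ne_of_gt h1),
      Real.log_div (ne_of_gt h) (ne_of_gt h2)]
    have key := mul_le_mul_of_nonneg_left hlog hy
    have e : a * (y * (Real.log y - Real.log t₁) + t₁ - y) +
        c * (y * (Real.log y - Real.log t₂) + t₂ - y) =
        y * Real.log y - (y * (a * Real.log t₁) + y * (c * Real.log t₂)) +
          (a * t₁ + c * t₂) - y := by
      linear_combination (y * Real.log y - y) * hac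
    rw [e]
    nlinarith [key]

lemma klNorm_le_sum {N : ℕ} (x : EuclideanSpace ℝ (Fin N)) (hx : ∀ i, 0 ≤ x i) :
    ‖x‖ ≤ ∑ i, x i := by
  rw [EuclideanSpace.norm_eq]
  have h1 : ∀ i, ‖x i‖ = x i := fun i => Real.norm_of_nonneg (hx i)
  have hs : 0 ≤ ∑ i, x i := Finset.sum_nonneg fun i _ => hx i
  have h2 : ∑ i, ‖x i‖ ^ 2 ≤ (∑ i, x i) ^ 2 := by
    calc ∑ i, ‖x i‖ ^ 2 = ∑ i, x i * x i := by simp [h1, sq]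
    _ ≤ ∑ i, x i * ∑ j, x j := Finset.sum_le_sum fun i _ =>
        mul_le_mul_of_nonneg_left (Finset.single_le_sum (fun j _ => hx j)
          (Finset.mem_univ i)) (hx i)
    _ = (∑ i, x i) ^ 2 := by rw [← Finset.sum_mul, sq]
  calc Real.sqrt (∑ i, ‖x i‖ ^ 2) ≤ Real.sqrt ((∑ i, x i) ^ 2) := Real.sqrt_le_sqrt h2
  _ = ∑ i, x i := Real.sqrt_sq hs

lemma klMulVec_comb {N : ℕ} (A : Matrix (Fin N) (Fin N) ℝ) (i : Fin N)
    (u v : EuclideanSpace ℝ (Fin N)) (a c : ℝ) :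
    A.mulVec (a • u + c • v) i = a * A.mulVec u i + c * A.mulVec v i := by
  simp [Matrix.mulVec, dotProduct, PiLp.add_apply, PiLp.smul_apply, smul_eq_mul,
    mul_add, Finset.sum_add_distrib, Finset.mul_sum, mul_comm, mul_left_comm]

lemma klOrthant_closed {N : ℕ} : IsClosed {x : EuclideanSpace ℝ (Fin N) | ∀ i, 0 ≤ x i} := by
  have : {x : EuclideanSpace ℝ (Fin N) | ∀ i, 0 ≤ x i} = ⋂ i, {x | 0 ≤ x i} := by
    ext x; simp [Set.mem_iInter]
  rw [this]
  exact isClosed_iInter fun i => isClosed_le continuous_const (EuclideanSpace.proj i).continuous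



/-- the Kullback–Leibler functional
`J₀ᴷᴸ(x) = Σᵢ { yᵢ ln(yᵢ/(Ax+b)ᵢ) + (Ax+b)ᵢ − yᵢ }` (with the convention `0·ln 0 = 0`)
is nonnegative, convex and coercive on the nonnegative orthant, hence `min_{x ≥ 0} J₀ᴷᴸ(x)`
has a global solution. -/
theorem kl_nonneg_convex_coercive_exists_min
    (N : ℕ) (A : Matrix (Fin N) (Fin N) ℝ)
    (hA_nonneg : ∀ i j, 0 ≤ A i j)
    (hA_row : ∀ i, ∃ j, 0 < A i j)
    (hA_col : ∀ j, ∃ i, 0 < A i j)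
    (b y : EuclideanSpace ℝ (Fin N))
    (hb : ∀ i, 0 < b i) (hy : ∀ i, 0 ≤ y i)
    (J : EuclideanSpace ℝ (Fin N) → ℝ)
    (hJ : ∀ x, J x = ∑ i, (y i * Real.log (y i / (A.mulVec x i + b i))
        + (A.mulVec x i + b i) - y i)) :
    (∀ x : EuclideanSpace ℝ (Fin N), (∀ i, 0 ≤ x i) → 0 ≤ J x) ∧
    ConvexOn ℝ {x : EuclideanSpace ℝ (Fin N) | ∀ i, 0 ≤ x i} J ∧
    (∀ x : ℕ → EuclideanSpace ℝ (Fin N), (∀ j i, 0 ≤ x j i) →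
      Filter.Tendsto (fun j => ‖x j‖) Filter.atTop Filter.atTop →
      Filter.Tendsto (fun j => J (x j)) Filter.atTop Filter.atTop) ∧
    (∃ xstar : EuclideanSpace ℝ (Fin N), (∀ i, 0 ≤ xstar i) ∧
      ∀ x : EuclideanSpace ℝ (Fin N), (∀ i, 0 ≤ x i) → J xstar ≤ J x) := by
  -- positivity of the affine terms on the orthant
  have tpos : ∀ x : EuclideanSpace ℝ (Fin N), (∀ i, 0 ≤ x i) →
      ∀ i, 0 < A.mulVec x i + b i := by
    intro x hx i
    have h0 : (0:ℝ) ≤ ∑ j, A i j * x j :=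
      Finset.sum_nonneg fun j _ => mul_nonneg (hA_nonneg i j) (hx j)
    have : 0 ≤ A.mulVec x i := by
      simpa [Matrix.mulVec, dotProduct] using h0
    linarith [hb i]
  -- Part 1 : nonnegativity
  have part1 : ∀ x : EuclideanSpace ℝ (Fin N), (∀ i, 0 ≤ x i) → 0 ≤ J x := by
    intro x hx
    rw [hJ]
    exact Finset.sum_nonneg fun i _ => klTerm_nonneg _ _ (hy i) (tpos x hx i)
  -- Part 2 : convexity
  have Sconvex : Convex ℝ {x : EuclideanSpace ℝ (Fin N) | ∀ i, 0 ≤ x i} := by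
    intro u hu v hv a c ha hc hac
    intro i
    have : (a • u + c • v) i = a * u i + c * v i := by
      simp [PiLp.add_apply, PiLp.smul_apply, smul_eq_mul]
    rw [this]
    exact add_nonneg (mul_nonneg ha (hu i)) (mul_nonneg hc (hv i))
  have part2 : ConvexOn ℝ {x : EuclideanSpace ℝ (Fin N) | ∀ i, 0 ≤ x i} J := by
    refine ⟨Sconvex, ?_⟩
    intro u hu v hv a c ha hc hac
    rw [hJ, hJ, hJ, smul_eq_mul, smul_eq_mul, Finset.mul_sum, Finset.mul_sum,
      ← Finset.sum_add_distrib]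
    refine Finset.sum_le_sum fun i _ => ?_
    have hmv : A.mulVec (a • u + c • v) i + b i =
        a * (A.mulVec u i + b i) + c * (A.mulVec v i + b i) := by
      rw [klMulVec_comb]
      have : (b i : ℝ) = a * b i + c * b i := by rw [← add_mul, hac, one_mul]
      linarith
    rw [WithLp.ofLp_add, WithLp.ofLp_smul, WithLp.ofLp_smul]
    rw [hmv]
    exact klTerm_convex (y i) _ _ a c (hy i) (tpos u hu i) (tpos v hv i) ha hc hac
  -- key coercivity bound
  have key : ∀ M : ℝ, N ≠ 0 → ∃ R : ℝ, ∀ x : EuclideanSpace ℝ (Fin N),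
      (∀ i, 0 ≤ x i) → R ≤ ‖x‖ → M ≤ J x := by
    intro M hN
    haveI hne : Nonempty (Fin N) := ⟨⟨0, Nat.pos_of_ne_zero hN⟩⟩
    set Y : ℝ := ∑ i, y i with hYdef
    have hY : 0 ≤ Y := Finset.sum_nonneg fun i _ => hy i
    have hyY : ∀ i, y i ≤ Y := fun i =>
      Finset.single_le_sum (fun j _ => hy j) (Finset.mem_univ i)
    set M' : ℝ := max M 0 with hM'def
    have hM' : 0 ≤ M' := le_max_right _ _
    set T : ℝ := max 1 ((2 * Y + M' + 2) ^ 2) with hTdef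
    have hT1 : (1 : ℝ) ≤ T := le_max_left _ _
    set c : ℝ := Finset.univ.inf' Finset.univ_nonempty (fun m => ∑ i, A i m) with hcdef
    have hc : 0 < c := by
      rw [hcdef, Finset.lt_inf'_iff]
      intro m _
      obtain ⟨i, hi⟩ := hA_col m
      exact Finset.sum_pos' (fun k _ => hA_nonneg k m) ⟨i, Finset.mem_univ i, hi⟩
    have hcle : ∀ m, c ≤ ∑ i, A i m := fun m => Finset.inf'_le _ (Finset.mem_univ m)
    refine ⟨(N : ℝ) * T / c, ?_⟩
    intro x hx hR
    have hsum : (N : ℝ) * T ≤ ∑ i, (A.mulVec x i + b i) := by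
      have e1 : ∑ i, (A.mulVec x i + b i) = (∑ j, (∑ i, A i j) * x j) + ∑ i, b i := by
        simp only [Matrix.mulVec, dotProduct]
        rw [Finset.sum_add_distrib]
        congr 1
        rw [Finset.sum_comm]
        exact Finset.sum_congr rfl fun j _ => (Finset.sum_mul _ _ _).symm
      have e2 : ∑ j, c * x j ≤ ∑ j, (∑ i, A i j) * x j :=
        Finset.sum_le_sum fun j _ => mul_le_mul_of_nonneg_right (hcle j) (hx j)
      have e3 : c * ((N : ℝ) * T / c) ≤ c * ∑ j, x j := by
        refine mul_le_mul_of_nonneg_left ?_ hc.le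
        exact le_trans (le_trans hR (klNorm_le_sum x hx)) (le_refl _)
      have e4 : c * ((N : ℝ) * T / c) = (N : ℝ) * T := by field_simp
      have e5 : 0 ≤ ∑ i, b i := Finset.sum_nonneg fun i _ => (hb i).le
      rw [← Finset.mul_sum] at e2
      rw [e1]
      linarith
    -- some coordinate of Ax + b is large
    have hex : ∃ i, T ≤ A.mulVec x i + b i := by
      by_contra h
      push_neg at h
      have hlt : ∑ i, (A.mulVec x i + b i) < ∑ _i : Fin N, T :=
        Finset.sum_lt_sum_of_nonempty Finset.univ_nonempty fun i _ => h i
      rw [Finset.sum_const, Finset.card_univ, Fintype.card_fin, nsmul_eq_mul] at hlt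
      linarith
    obtain ⟨i, hiT⟩ := hex
    set t : ℝ := A.mulVec x i + b i with htdef
    have ht1 : (1 : ℝ) ≤ t := le_trans hT1 hiT
    have hsq : 2 * Y + M' + 2 ≤ Real.sqrt t := by
      have h1 : Real.sqrt ((2 * Y + M' + 2) ^ 2) ≤ Real.sqrt t :=
        Real.sqrt_le_sqrt (le_trans (le_max_right _ _) hiT)
      rwa [Real.sqrt_sq (by linarith)] at h1
    have hterm : M ≤ y i * Real.log (y i / t) + t - y i := by
      have hlb := klTerm_lb (y i) t (hy i) ht1
      have h2 : M' + 2 ≤ Real.sqrt t - 2 * y i := by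
        have := hyY i; linarith
      have h3 : (1 : ℝ) ≤ Real.sqrt t := by linarith
      have h4 : M' + 2 ≤ Real.sqrt t * (Real.sqrt t - 2 * y i) := by nlinarith
      have h5 : M ≤ M' := le_max_left _ _
      linarith
    rw [hJ]
    have hsingle := Finset.single_le_sum
      (f := fun k => y k * Real.log (y k / (A.mulVec x k + b k)) + (A.mulVec x k + b k) - y k)
      (fun k _ => klTerm_nonneg _ _ (hy k) (tpos x hx k)) (Finset.mem_univ i)
    simp only at hsingle
    linarith
  -- Part 3 : coercivity
  have part3 : ∀ x : ℕ → EuclideanSpace ℝ (Fin N), (∀ j i, 0 ≤ x j i) →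
      Filter.Tendsto (fun j => ‖x j‖) Filter.atTop Filter.atTop →
      Filter.Tendsto (fun j => J (x j)) Filter.atTop Filter.atTop := by
    intro x hx hnorm
    rcases Nat.eq_zero_or_pos N with hN | hN
    · exfalso
      obtain ⟨j, hj⟩ := (hnorm.eventually_ge_atTop 1).exists
      rw [EuclideanSpace.norm_eq] at hj
      subst hN
      simp at hj
      linarith
    · rw [Filter.tendsto_atTop]
      intro M
      obtain ⟨R, hR⟩ := key M hN.ne'
      filter_upwards [hnorm.eventually_ge_atTop R] with j hj
      exact hR (x j) (hx j) hj
  -- Part 4 : existence of a minimizer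
  have part4 : ∃ xstar : EuclideanSpace ℝ (Fin N), (∀ i, 0 ≤ xstar i) ∧
      ∀ x : EuclideanSpace ℝ (Fin N), (∀ i, 0 ≤ x i) → J xstar ≤ J x := by
    rcases Nat.eq_zero_or_pos N with hN | hN
    · subst hN
      refine ⟨0, fun i => i.elim0, fun x _ => ?_⟩
      have : x = 0 := Subsingleton.elim x 0
      rw [this]
    · -- continuity of J on the orthant
      have hcont : ContinuousOn J {x : EuclideanSpace ℝ (Fin N) | ∀ i, 0 ≤ x i} := by
        have hJfun : J = fun x : EuclideanSpace ℝ (Fin N) => ∑ i, (y i * Real.log (y i / (A.mulVec x i + b i))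
            + (A.mulVec x i + b i) - y i) := funext hJ
        rw [hJfun]
        apply continuousOn_finset_sum
        intro i _
        have htcont : Continuous fun x : EuclideanSpace ℝ (Fin N) => A.mulVec x i + b i := by
          have h1 : Continuous fun x : EuclideanSpace ℝ (Fin N) => ∑ j, A i j * x j :=
            continuous_finset_sum _ fun j _ =>
              continuous_const.mul (EuclideanSpace.proj j).continuous
          simpa [Matrix.mulVec, dotProduct, Pi.add_def] using h1.add continuous_const
        rcases eq_or_lt_of_le (hy i) with h0 | h0
        · simp only [← h0, zero_mul, zero_add, sub_zero]
          exact htcont.continuousOn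
        · refine ContinuousOn.sub ?_ continuousOn_const
          refine ContinuousOn.add ?_ htcont.continuousOn
          refine continuousOn_const.mul ?_
          refine ContinuousOn.log ?_ ?_
          · exact continuousOn_const.div htcont.continuousOn
              fun x hx => (tpos x hx i).ne'
          · exact fun x hx => (div_pos h0 (tpos x hx i)).ne'
      obtain ⟨R₀, hR₀⟩ := key (J 0) hN.ne'
      set R : ℝ := max R₀ 0 with hRdef
      set S : Set (EuclideanSpace ℝ (Fin N)) := {x | ∀ i, 0 ≤ x i} with hSdef
      set K : Set (EuclideanSpace ℝ (Fin N)) := Metric.closedBall 0 R ∩ S with hKdef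
      have hzeroS : (0 : EuclideanSpace ℝ (Fin N)) ∈ S := by
        intro i
        simp
      have hKc : IsCompact K :=
        (isCompact_closedBall _ _).inter_right klOrthant_closed
      have hKne : K.Nonempty :=
        ⟨0, Metric.mem_closedBall_self (le_max_right _ _), hzeroS⟩
      obtain ⟨xstar, hxK, hmin⟩ :=
        hKc.exists_isMinOn hKne (hcont.mono Set.inter_subset_right)
      refine ⟨xstar, hxK.2, ?_⟩
      intro x hxS
      by_cases hxb : ‖x‖ ≤ R
      · exact hmin ⟨mem_closedBall_zero_iff.mpr hxb, hxS⟩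
      · push_neg at hxb
        have h1 : J 0 ≤ J x :=
          hR₀ x hxS (le_trans (le_max_left _ _) hxb.le)
        have h2 : J xstar ≤ J 0 :=
          hmin ⟨Metric.mem_closedBall_self (le_max_right _ _), hzeroS⟩
        linarith
  exact ⟨part1, part2, part3, part4⟩
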